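/- Let z₁,…,zₙ be nonzero complex numbers, 𝒮 = {a₁,…,a_k} a set of complex numbers, and w̃ an optimal solution of maximizing |∑ᵢ wᵢ zᵢ| over wᵢ ∈ 𝒮, with s̃ = ∑ᵢ w̃ᵢ zᵢ ≠ 0. Set δ = arg(s̃). If zᵢ satisfies Re((aⱼ - aₘ) e^{-iδ} zᵢ) > 0 for all m ≠ j (i.e., e^{-iδ}zᵢ lies in the cone Aⱼ), then w̃ᵢ = aⱼ. -/

import Mathlib

theorem stmt8 (n k : ℕ) (z : Fin n → ℂ) (hz : ∀ i, z i ≠ 0)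
    (a : Fin k → ℂ) (ha : Function.Injective a)
    (w : Fin n → ℂ) (hw : ∀ i, ∃ j, w i = a j)
    (hopt : ∀ v : Fin n → ℂ, (∀ i, ∃ j, v i = a j) →
      ‖∑ i, v i * z i‖ ≤ ‖∑ i, w i * z i‖)
    (hs : (∑ i, w i * z i) ≠ 0)
    (i : Fin n) (j : Fin k)
    (hcone : ∀ m, m ≠ j →
      0 < ((a j - a m) *
        ((starRingEnd ℂ) (∑ i, w i * z i) / ((‖∑ i, w i * z i‖ : ℝ) : ℂ)) *
        z i).re) :
    w i = a j := by
  obtain ⟨m, hm⟩ := hw i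
  by_cases hmj : m = j
  · rw [hm, hmj]
  set s : ℂ := ∑ i, w i * z i with hs_def
  have hr : (0 : ℝ) < ‖s‖ := by
    exact norm_pos_iff.mpr hs
  set d : ℂ := (a j - a m) * z i with hd_def
  -- positivity of Re(conj s * d)
  have hre : 0 < ((starRingEnd ℂ) s * d).re := by
    have hc := hcone m hmj
    have heq : (starRingEnd ℂ) s * d =
        ((‖s‖ : ℝ) : ℂ) *
          ((a j - a m) * ((starRingEnd ℂ) s / ((‖s‖ : ℝ) : ℂ)) * z i) := by
      have hne : ((‖s‖ : ℝ) : ℂ) ≠ 0 := by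
        exact_mod_cast hr.ne'
      field_simp [hd_def]
      ring
    rw [heq]
    rw [Complex.re_ofReal_mul]
    positivity
  -- the modified vector
  set v : Fin n → ℂ := Function.update w i (a j) with hv_def
  have hv : ∀ x, ∃ jj, v x = a jj := by
    intro x
    by_cases hx : x = i
    · exact ⟨j, by simp [hv_def, hx]⟩
    · obtain ⟨jj, hjj⟩ := hw x
      exact ⟨jj, by simp [hv_def, hx, hjj]⟩
  have hsum : (∑ x, v x * z x) = s + d := by
    have : (∑ x, v x * z x) - s = ∑ x, (v x - w x) * z x := by
      rw [hs_def, ← Finset.sum_sub_distrib]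
      congr 1
      ext x
      ring
    have h2 : (∑ x, (v x - w x) * z x) = d := by
      rw [Finset.sum_eq_single i]
      · simp [hv_def, hm, hd_def]
      · intro b _ hb
        simp [hv_def, Function.update_of_ne hb]
      · intro h
        exact absurd (Finset.mem_univ i) h
    linear_combination this.trans h2
  have hlt : ‖s‖ < ‖s + d‖ := by
    have hsq : (‖s‖) ^ 2 < (‖s + d‖) ^ 2 := by
      rw [Complex.sq_norm, Complex.sq_norm, Complex.normSq_add]
      have hrewrite : (s * (starRingEnd ℂ) d).re = ((starRingEnd ℂ) s * d).re := by
        have : s * (starRingEnd ℂ) d = (starRingEnd ℂ) ((starRingEnd ℂ) s * d) := by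
          simp [mul_comm]
        rw [this, Complex.conj_re]
      rw [hrewrite]
      have hnsq : 0 ≤ Complex.normSq d := Complex.normSq_nonneg d
      nlinarith
    exact lt_of_pow_lt_pow_left₀ 2 (norm_nonneg _) hsq
  have := hopt v hv
  rw [hsum] at this
  exact absurd this (not_le.mpr hlt)
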